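/- For a sequence-form polytope co X, the set of linear maps φ : co X → co X equals the set of maps x ↦ Ax for matrices A that are the A-component of some pair (A,B) satisfying the UTC constraint system. That is, the set of UTC deviations coincides exactly with the set of linear deviations. -/

import Mathlib

/-- A tree-form decision problem: sequences `Seq` (observation points, with root `∅`),
decision points `Dp`, where `seqs j` is the set of sequences `ja` for actions `a ∈ A_j`,
`parentSeq j = p_j`, `parentDp σ` the decision point immediately preceding `σ` (none for the root),
`children σ = C_σ`, and `depth` counts the number of decision points above a sequence. -/
structure TFDP where
  Seq : Type
  Dp : Type
  [finSeq : Fintype Seq]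
  [decSeq : DecidableEq Seq]
  [finDp : Fintype Dp]
  [decDp : DecidableEq Dp]
  root : Seq
  seqs : Dp → Finset Seq
  parentSeq : Dp → Seq
  parentDp : Seq → Option Dp
  children : Seq → Finset Dp
  depth : Seq → ℕ
  seqs_nonempty : ∀ j, (seqs j).Nonempty
  mem_children : ∀ σ j, j ∈ children σ ↔ parentSeq j = σ
  parentDp_spec : ∀ σ j, parentDp σ = some j ↔ σ ∈ seqs j
  parentDp_root : parentDp root = none
  depth_root : depth root = 0
  depth_seq : ∀ j, ∀ σ ∈ seqs j, depth σ = depth (parentSeq j) + 1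

attribute [instance] TFDP.finSeq TFDP.decSeq TFDP.finDp TFDP.decDp

namespace TFDP

variable (T : TFDP)

/-- The sequence-form polytope `co X`. -/
def poly : Set (T.Seq → ℝ) :=
  {x | (∀ σ, 0 ≤ x σ) ∧ x T.root = 1 ∧ ∀ j, x (T.parentSeq j) = ∑ σ ∈ T.seqs j, x σ}

/-- The pure (0/1) sequence-form strategies `X`. -/
def pureStrats : Set (T.Seq → ℝ) :=
  {x ∈ T.poly | ∀ σ, x σ = 0 ∨ x σ = 1}

/-- Matrix-vector multiplication for `Seq × Seq` matrices. -/
def mulVec (A : T.Seq → T.Seq → ℝ) (x : T.Seq → ℝ) : T.Seq → ℝ :=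
  fun σ => ∑ σ' : T.Seq, A σ σ' * x σ'

/-- `B(j, p_σ)`, with the convention `B(j, p_∅) := 0`. -/
def Bp (B : T.Dp → T.Dp → ℝ) (j : T.Dp) (σ : T.Seq) : ℝ :=
  (T.parentDp σ).elim 0 (B j)

/-- The UTC constraint system for a pair `(A, B)`. -/
def UTC (A : T.Seq → T.Seq → ℝ) (B : T.Dp → T.Dp → ℝ) : Prop :=
  (∀ (j : T.Dp) (σ' : T.Seq),
      A (T.parentSeq j) σ' + T.Bp B j σ'
        = (∑ σ ∈ T.seqs j, A σ σ') + ∑ j' ∈ T.children σ', B j j')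
  ∧ A T.root T.root = 1
  ∧ (∀ σ', σ' ≠ T.root → A T.root σ' = 0)
  ∧ (∀ σ σ', 0 ≤ A σ σ')
  ∧ (∀ j j', 0 ≤ B j j')

end TFDP

namespace TFDP

variable (T : TFDP)

/-! ### Auxiliary development -/

/-- dot product of a cost row with a vector -/
def dot (c x : T.Seq → ℝ) : ℝ := ∑ τ, c τ * x τ

lemma mulVec_apply (A : T.Seq → T.Seq → ℝ) (x : T.Seq → ℝ) (σ : T.Seq) :
    T.mulVec A x σ = T.dot (A σ) x := rfl

lemma mem_seqs_unique {σ : T.Seq} {j j' : T.Dp} (h : σ ∈ T.seqs j) (h' : σ ∈ T.seqs j') :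
    j = j' := by
  have h1 := (T.parentDp_spec σ j).mpr h
  have h2 := (T.parentDp_spec σ j').mpr h'
  rw [h1] at h2; exact Option.some_injective _ h2

lemma root_not_mem_seqs (j : T.Dp) : T.root ∉ T.seqs j := by
  intro h
  have := (T.parentDp_spec T.root j).mpr h
  rw [T.parentDp_root] at this; exact nomatch this

lemma depth_parent_lt {τ : T.Seq} {j : T.Dp} (h : T.parentDp τ = some j) :
    T.depth (T.parentSeq j) < T.depth τ := by
  have := T.depth_seq j τ ((T.parentDp_spec τ j).mp h)
  omega

/-- induction on depth -/
lemma depth_ind (P : T.Seq → Prop)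
    (ih : ∀ τ, (∀ σ, T.depth σ < T.depth τ → P σ) → P τ) : ∀ τ, P τ := by
  have key : ∀ n τ, T.depth τ ≤ n → P τ := by
    intro n
    induction n with
    | zero => intro τ hτ; exact ih τ (fun σ hσ => absurd hσ (by omega))
    | succ n hn =>
      intro τ hτ
      refine ih τ (fun σ hσ => hn σ (by omega))
  exact fun τ => key (T.depth τ) τ le_rfl

def zeta' (T : TFDP) (π : T.Dp → T.Seq) (ρ : T.Seq) (τ : T.Seq) : ℝ :=
  if τ = ρ then 1 else
    match h : T.parentDp τ with
    | some j => (if π j = τ then (1:ℝ) else 0) * zeta' T π ρ (T.parentSeq j)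
    | none => 0
termination_by T.depth τ
decreasing_by exact T.depth_parent_lt h

/-- The 0/1 indicator of the continuation below `ρ` induced by program `π`. -/
def zeta (π : T.Dp → T.Seq) (ρ τ : T.Seq) : ℝ := zeta' T π ρ τ

lemma zeta_self (π : T.Dp → T.Seq) (ρ : T.Seq) : T.zeta π ρ ρ = 1 := by
  rw [zeta, zeta']; simp

lemma zeta_none {π : T.Dp → T.Seq} {ρ τ : T.Seq} (h : T.parentDp τ = none) (hne : τ ≠ ρ) :
    T.zeta π ρ τ = 0 := by
  rw [zeta, zeta']; simp only [if_neg hne]; split <;> simp_all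

lemma zeta_step {π : T.Dp → T.Seq} {ρ τ : T.Seq} {j : T.Dp} (h : T.parentDp τ = some j)
    (hne : τ ≠ ρ) :
    T.zeta π ρ τ = (if π j = τ then (1:ℝ) else 0) * T.zeta π ρ (T.parentSeq j) := by
  show T.zeta' π ρ τ = (if π j = τ then (1:ℝ) else 0) * T.zeta' π ρ (T.parentSeq j)
  rw [zeta']; simp only [if_neg hne]; split <;> simp_all

lemma zeta_zero_or_one (π : T.Dp → T.Seq) (ρ : T.Seq) :
    ∀ τ, T.zeta π ρ τ = 0 ∨ T.zeta π ρ τ = 1 := by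
  refine T.depth_ind _ (fun τ ih => ?_)
  by_cases hτ : τ = ρ
  · right; rw [hτ]; exact T.zeta_self π ρ
  · rcases h : T.parentDp τ with _ | j
    · left; exact T.zeta_none h hτ
    · rw [T.zeta_step h hτ]
      rcases ih (T.parentSeq j) (T.depth_parent_lt h) with h0 | h1
      · left; rw [h0, mul_zero]
      · rw [h1, mul_one]
        by_cases hp : π j = τ
        · right; rw [if_pos hp]
        · left; rw [if_neg hp]

lemma zeta_nonneg (π : T.Dp → T.Seq) (ρ τ : T.Seq) : 0 ≤ T.zeta π ρ τ := by
  rcases T.zeta_zero_or_one π ρ τ with h | h <;> rw [h] <;> norm_num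

lemma zeta_ne_zero_depth {π : T.Dp → T.Seq} {ρ : T.Seq} :
    ∀ τ, τ ≠ ρ → T.zeta π ρ τ ≠ 0 → T.depth ρ < T.depth τ := by
  refine T.depth_ind _ (fun τ ih hne hz => ?_)
  rcases h : T.parentDp τ with _ | j
  · exact absurd (T.zeta_none h hne) hz
  · rw [T.zeta_step h hne] at hz
    have hz2 : T.zeta π ρ (T.parentSeq j) ≠ 0 := fun h0 => hz (by rw [h0, mul_zero])
    by_cases hp : T.parentSeq j = ρ
    · exact hp ▸ T.depth_parent_lt h
    · exact lt_trans (ih (T.parentSeq j) (T.depth_parent_lt h) hp hz2) (T.depth_parent_lt h)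

lemma zeta_high_zero {π : T.Dp → T.Seq} {ρ τ : T.Seq} (hne : τ ≠ ρ)
    (hd : T.depth τ ≤ T.depth ρ) : T.zeta π ρ τ = 0 := by
  by_contra hz
  exact absurd (T.zeta_ne_zero_depth τ hne hz) (by omega)

lemma zeta_support {π : T.Dp → T.Seq} {ρ τ : T.Seq} (hz : T.zeta π ρ τ ≠ 0) :
    τ = ρ ∨ ∃ j, T.parentDp τ = some j ∧ π j = τ := by
  by_cases hne : τ = ρ
  · exact Or.inl hne
  rcases h : T.parentDp τ with _ | j
  · exact absurd (T.zeta_none h hne) hz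
  · right
    refine ⟨j, rfl, ?_⟩
    by_contra hp
    rw [T.zeta_step h hne, if_neg hp, zero_mul] at hz
    exact hz rfl

/-- a program picks a sequence at every decision point -/
def IsProg (π : T.Dp → T.Seq) : Prop := ∀ j, π j ∈ T.seqs j

lemma zeta_conserve {π : T.Dp → T.Seq} (hπ : T.IsProg π) (ρ : T.Seq) (j : T.Dp) :
    T.zeta π ρ (T.parentSeq j)
      = (∑ τ ∈ T.seqs j, T.zeta π ρ τ) - (if ρ ∈ T.seqs j then 1 else 0) := by
  by_cases hρ : ρ ∈ T.seqs j
  · rw [if_pos hρ]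
    have hd : T.depth ρ = T.depth (T.parentSeq j) + 1 := T.depth_seq j ρ hρ
    have hz : T.zeta π ρ (T.parentSeq j) = 0 :=
      T.zeta_high_zero (by intro h; rw [h] at hd; omega) (by omega)
    rw [hz]
    have : ∀ τ ∈ T.seqs j, T.zeta π ρ τ = if τ = ρ then 1 else 0 := by
      intro τ hτ
      by_cases hne : τ = ρ
      · rw [if_pos hne, hne]; exact T.zeta_self π ρ
      · rw [if_neg hne, T.zeta_step ((T.parentDp_spec τ j).mpr hτ) hne, hz, mul_zero]
    rw [Finset.sum_congr rfl this, Finset.sum_ite_eq' (T.seqs j) ρ (fun _ => (1:ℝ)),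
      if_pos hρ]
    ring
  · rw [if_neg hρ, sub_zero]
    have : ∀ τ ∈ T.seqs j, T.zeta π ρ τ
        = (if π j = τ then (1:ℝ) else 0) * T.zeta π ρ (T.parentSeq j) := by
      intro τ hτ
      have hne : τ ≠ ρ := fun h => hρ (h ▸ hτ)
      exact T.zeta_step ((T.parentDp_spec τ j).mpr hτ) hne
    rw [Finset.sum_congr rfl this]
    have : ∀ τ ∈ T.seqs j, (if π j = τ then (1:ℝ) else 0) * T.zeta π ρ (T.parentSeq j)
        = if τ = π j then T.zeta π ρ (T.parentSeq j) else 0 := by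
      intro τ _
      by_cases hp : π j = τ
      · rw [if_pos hp, if_pos hp.symm, one_mul]
      · rw [if_neg hp, if_neg (Ne.symm hp), zero_mul]
    rw [Finset.sum_congr rfl this, Finset.sum_ite_eq' (T.seqs j) (π j), if_pos (hπ j)]

lemma zeta_root_mem_poly {π : T.Dp → T.Seq} (hπ : T.IsProg π) :
    T.zeta π T.root ∈ T.poly := by
  refine ⟨fun τ => T.zeta_nonneg π T.root τ, T.zeta_self π T.root, fun j => ?_⟩
  show T.zeta π T.root (T.parentSeq j) = ∑ σ ∈ T.seqs j, T.zeta π T.root σ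
  rw [T.zeta_conserve hπ T.root j, if_neg (T.root_not_mem_seqs j), sub_zero]

/-! ### A strictly positive point of the polytope -/

noncomputable def posPt' (T : TFDP) (τ : T.Seq) : ℝ :=
  match h : T.parentDp τ with
  | some j => posPt' T (T.parentSeq j) / (T.seqs j).card
  | none => 1
termination_by T.depth τ
decreasing_by exact T.depth_parent_lt h

noncomputable def posPt (τ : T.Seq) : ℝ := posPt' T τ

lemma posPt_none {τ : T.Seq} (h : T.parentDp τ = none) : T.posPt τ = 1 := by
  rw [posPt, posPt'.eq_def]; split <;> simp_all

lemma posPt_step {τ : T.Seq} {j : T.Dp} (h : T.parentDp τ = some j) :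
    T.posPt τ = T.posPt (T.parentSeq j) / (T.seqs j).card := by
  show T.posPt' τ = T.posPt' (T.parentSeq j) / (T.seqs j).card
  rw [posPt'.eq_def]; split <;> simp_all

lemma posPt_pos : ∀ τ, 0 < T.posPt τ := by
  refine T.depth_ind _ (fun τ ih => ?_)
  rcases h : T.parentDp τ with _ | j
  · rw [T.posPt_none h]; norm_num
  · rw [T.posPt_step h]
    have hc : 0 < ((T.seqs j).card : ℝ) := by
      have := Finset.card_pos.mpr (T.seqs_nonempty j)
      exact_mod_cast this
    exact div_pos (ih _ (T.depth_parent_lt h)) hc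

lemma posPt_mem_poly : T.posPt ∈ T.poly := by
  refine ⟨fun τ => (T.posPt_pos τ).le, T.posPt_none T.parentDp_root, fun j => ?_⟩
  have hstep : ∀ σ ∈ T.seqs j, T.posPt σ = T.posPt (T.parentSeq j) / (T.seqs j).card :=
    fun σ hσ => T.posPt_step ((T.parentDp_spec σ j).mpr hσ)
  rw [Finset.sum_congr rfl hstep, Finset.sum_const, nsmul_eq_mul]
  have hc : ((T.seqs j).card : ℝ) ≠ 0 := by
    have := Finset.card_pos.mpr (T.seqs_nonempty j)
    positivity
  field_simp

/-! ### Functionals vanishing on the polytope -/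

/-- conservation of a (signed) flow -/
def Conserves (v : T.Seq → ℝ) : Prop := ∀ j, v (T.parentSeq j) = ∑ σ ∈ T.seqs j, v σ

lemma dot_vanish {g : T.Seq → ℝ} (hg : ∀ x ∈ T.poly, T.dot g x = 0) {v : T.Seq → ℝ}
    (hv : T.Conserves v) (h0 : v T.root = 0) : T.dot g v = 0 := by
  classical
  have hne : (Finset.univ : Finset T.Seq).Nonempty := ⟨T.root, Finset.mem_univ _⟩
  set m := Finset.univ.inf' hne T.posPt with hm
  set M := Finset.univ.sup' hne (fun τ => |v τ|) with hM
  have hmpos : 0 < m := by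
    obtain ⟨τ0, _, hτ0⟩ := Finset.exists_mem_eq_inf' hne T.posPt
    rw [hm, hτ0]; exact T.posPt_pos τ0
  have hM0 : 0 ≤ M := le_trans (abs_nonneg (v T.root)) (Finset.le_sup' (fun τ => |v τ|) (Finset.mem_univ T.root))
  set ε := m / (M + 1) with hε
  have hεpos : 0 < ε := div_pos hmpos (by linarith)
  have hx : (fun τ => T.posPt τ + ε * v τ) ∈ T.poly := by
    refine ⟨fun τ => ?_, ?_, fun j => ?_⟩
    · show 0 ≤ T.posPt τ + ε * v τ
      have h1 : m ≤ T.posPt τ := Finset.inf'_le _ (Finset.mem_univ τ)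
      have h2 : |v τ| ≤ M := Finset.le_sup' (fun τ => |v τ|) (Finset.mem_univ τ)
      have h3 : -(|v τ|) ≤ v τ := neg_abs_le _
      have h4 : ε * |v τ| ≤ ε * M := mul_le_mul_of_nonneg_left h2 hεpos.le
      have h5 : ε * M < m := by
        rw [hε]
        rw [div_mul_eq_mul_div, div_lt_iff₀ (by linarith : (0:ℝ) < M + 1)]
        nlinarith
      have h6 : ε * (-|v τ|) ≤ ε * v τ := mul_le_mul_of_nonneg_left h3 hεpos.le
      have h7 : ε * (-|v τ|) = -(ε * |v τ|) := by ring
      linarith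
    · show T.posPt T.root + ε * v T.root = 1
      rw [h0, T.posPt_none T.parentDp_root]; ring
    · show T.posPt (T.parentSeq j) + ε * v (T.parentSeq j)
        = ∑ σ ∈ T.seqs j, (T.posPt σ + ε * v σ)
      rw [T.posPt_mem_poly.2.2 j, hv j, Finset.mul_sum, ← Finset.sum_add_distrib]
  have e1 : T.dot g (fun τ => T.posPt τ + ε * v τ) = 0 := hg _ hx
  have e2 : T.dot g T.posPt = 0 := hg _ T.posPt_mem_poly
  have e3 : T.dot g (fun τ => T.posPt τ + ε * v τ) = T.dot g T.posPt + ε * T.dot g v := by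
    rw [dot, dot, dot, Finset.mul_sum, ← Finset.sum_add_distrib]
    exact Finset.sum_congr rfl (fun τ _ => by ring)
  rw [e3, e2, zero_add] at e1
  rcases mul_eq_zero.mp e1 with h | h
  · exact absurd h (ne_of_gt hεpos)
  · exact h

lemma dot_zeta_sibling {g : T.Seq → ℝ} (hg : ∀ x ∈ T.poly, T.dot g x = 0)
    {π1 π2 : T.Dp → T.Seq} (hπ1 : T.IsProg π1) (hπ2 : T.IsProg π2)
    {j' : T.Dp} {σ1 σ2 : T.Seq} (h1 : σ1 ∈ T.seqs j') (h2 : σ2 ∈ T.seqs j') :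
    T.dot g (T.zeta π1 σ1) = T.dot g (T.zeta π2 σ2) := by
  have hv : T.Conserves (fun τ => T.zeta π1 σ1 τ - T.zeta π2 σ2 τ) := by
    intro j
    have hc1 := T.zeta_conserve hπ1 σ1 j
    have hc2 := T.zeta_conserve hπ2 σ2 j
    have hmem : (σ1 ∈ T.seqs j) ↔ (σ2 ∈ T.seqs j) := by
      constructor
      · intro h; rw [T.mem_seqs_unique h h1]; exact h2
      · intro h; rw [T.mem_seqs_unique h h2]; exact h1
    show T.zeta π1 σ1 (T.parentSeq j) - T.zeta π2 σ2 (T.parentSeq j) = _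
    rw [hc1, hc2, Finset.sum_sub_distrib]
    by_cases hσ : σ1 ∈ T.seqs j
    · rw [if_pos hσ, if_pos (hmem.mp hσ)]; ring
    · rw [if_neg hσ, if_neg (fun h => hσ (hmem.mpr h))]; ring
  have h0 : T.zeta π1 σ1 T.root - T.zeta π2 σ2 T.root = 0 := by
    have z1 : T.zeta π1 σ1 T.root = 0 :=
      T.zeta_none T.parentDp_root (fun h => T.root_not_mem_seqs j' (h ▸ h1))
    have z2 : T.zeta π2 σ2 T.root = 0 :=
      T.zeta_none T.parentDp_root (fun h => T.root_not_mem_seqs j' (h ▸ h2))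
    rw [z1, z2, sub_zero]
  have := T.dot_vanish hg hv h0
  have hsplit : T.dot g (fun τ => T.zeta π1 σ1 τ - T.zeta π2 σ2 τ)
      = T.dot g (T.zeta π1 σ1) - T.dot g (T.zeta π2 σ2) := by
    rw [dot, dot, dot, ← Finset.sum_sub_distrib]
    exact Finset.sum_congr rfl (fun τ _ => by ring)
  rw [hsplit] at this
  linarith

lemma dot_zeta_orphan {g : T.Seq → ℝ} (hg : ∀ x ∈ T.poly, T.dot g x = 0)
    {π : T.Dp → T.Seq} (hπ : T.IsProg π) {ρ : T.Seq} (hρ : T.parentDp ρ = none)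
    (hne : ρ ≠ T.root) : T.dot g (T.zeta π ρ) = 0 := by
  have hv : T.Conserves (T.zeta π ρ) := by
    intro j
    have hρj : ρ ∉ T.seqs j := by
      intro h
      rw [(T.parentDp_spec ρ j).mpr h] at hρ; exact nomatch hρ
    have := T.zeta_conserve hπ ρ j
    rw [if_neg hρj, sub_zero] at this
    exact this
  have h0 : T.zeta π ρ T.root = 0 := T.zeta_none T.parentDp_root (Ne.symm hne)
  exact T.dot_vanish hg hv h0

/-! ### Decomposition of zeta along children -/

lemma zeta_decomp {π : T.Dp → T.Seq} (hπ : T.IsProg π) (ρ : T.Seq) :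
    ∀ τ, T.zeta π ρ τ
      = (if τ = ρ then 1 else 0) + ∑ j ∈ T.children ρ, T.zeta π (π j) τ := by
  have hπd : ∀ j, j ∈ T.children ρ → T.depth (π j) = T.depth ρ + 1 := by
    intro j hj
    rw [T.depth_seq j (π j) (hπ j), (T.mem_children ρ j).mp hj]
  refine T.depth_ind _ (fun τ ih => ?_)
  by_cases hτ : τ = ρ
  · subst hτ
    rw [if_pos rfl, T.zeta_self]
    have : ∀ j ∈ T.children τ, T.zeta π (π j) τ = 0 := by
      intro j hj
      exact T.zeta_high_zero (fun h => by have := hπd j hj; rw [← h] at this; omega)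
        (by have := hπd j hj; omega)
    rw [Finset.sum_congr rfl this, Finset.sum_const, smul_zero]; ring
  · rw [if_neg hτ, zero_add]
    rcases h : T.parentDp τ with _ | jt
    · rw [T.zeta_none h hτ]
      have : ∀ j ∈ T.children ρ, T.zeta π (π j) τ = 0 := by
        intro j hj
        have hne : τ ≠ π j := by
          intro he
          have := (T.parentDp_spec (π j) j).mpr (hπ j)
          rw [← he, h] at this; exact nomatch this
        exact T.zeta_none h hne
      rw [Finset.sum_congr rfl this, Finset.sum_const, smul_zero]
    · -- τ has parent decision point jt
      have hτmem : τ ∈ T.seqs jt := (T.parentDp_spec τ jt).mp h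
      by_cases hp : π jt = τ
      · -- τ is chosen by π at jt
        rw [T.zeta_step h hτ, if_pos hp, one_mul]
        rw [ih (T.parentSeq jt) (T.depth_parent_lt h)]
        have hterm : ∀ j ∈ T.children ρ, T.zeta π (π j) τ
            = (if j = jt then 1 else 0) + T.zeta π (π j) (T.parentSeq jt) := by
          intro j hj
          by_cases hje : j = jt
          · subst hje
            rw [if_pos rfl, ← hp, T.zeta_self]
            have : T.zeta π (π j) (T.parentSeq j) = 0 := by
              refine T.zeta_high_zero ?_ ?_
              · intro he
                have hd := T.depth_seq j (π j) (hπ j); rw [← he] at hd; omega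
              · have hd := T.depth_seq j (π j) (hπ j); omega
            rw [this]; ring
          · rw [if_neg hje, zero_add]
            have hne2 : τ ≠ π j := by
              intro he
              exact hje (T.mem_seqs_unique hτmem (he ▸ hπ j)).symm
            rw [T.zeta_step h hne2, if_pos hp, one_mul]
        rw [Finset.sum_congr rfl hterm, Finset.sum_add_distrib,
          Finset.sum_ite_eq' (T.children ρ) jt (fun _ => (1:ℝ))]
        have hiff : jt ∈ T.children ρ ↔ T.parentSeq jt = ρ := T.mem_children ρ jt
        by_cases hjc : jt ∈ T.children ρ
        · rw [if_pos hjc, if_pos (hiff.mp hjc)]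
        · rw [if_neg hjc, if_neg (fun he => hjc (hiff.mpr he))]
      · -- τ is not chosen at jt : both sides vanish
        rw [T.zeta_step h hτ, if_neg hp, zero_mul]
        have : ∀ j ∈ T.children ρ, T.zeta π (π j) τ = 0 := by
          intro j hj
          have hne2 : τ ≠ π j := by
            intro he
            have hjj : j = jt := T.mem_seqs_unique (he ▸ hπ j) hτmem
            exact hp (by rw [← hjj, ← he])
          rw [T.zeta_step h hne2, if_neg hp, zero_mul]
        rw [Finset.sum_congr rfl this, Finset.sum_const, smul_zero]

lemma dot_zeta_decomp {π : T.Dp → T.Seq} (hπ : T.IsProg π) (g : T.Seq → ℝ) (ρ : T.Seq) :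
    T.dot g (T.zeta π ρ) = g ρ + ∑ j ∈ T.children ρ, T.dot g (T.zeta π (π j)) := by
  rw [dot]
  have : ∀ τ ∈ Finset.univ, g τ * T.zeta π ρ τ
      = (if τ = ρ then g τ else 0) + ∑ j ∈ T.children ρ, g τ * T.zeta π (π j) τ := by
    intro τ _
    rw [T.zeta_decomp hπ ρ τ, mul_add, Finset.mul_sum]
    congr 1
    by_cases hτ : τ = ρ
    · rw [if_pos hτ, if_pos hτ, mul_one]
    · rw [if_neg hτ, if_neg hτ, mul_zero]
  rw [Finset.sum_congr rfl this, Finset.sum_add_distrib,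
    Finset.sum_ite_eq' Finset.univ ρ g, if_pos (Finset.mem_univ ρ), Finset.sum_comm]
  rfl

/-! ### Row canonicalization -/

def rvec (j : T.Dp) : T.Seq → ℝ :=
  fun τ => (if T.parentSeq j = τ then 1 else 0) - (if τ ∈ T.seqs j then 1 else 0)

lemma dot_rvec {x : T.Seq → ℝ} (hx : x ∈ T.poly) (j : T.Dp) : T.dot (T.rvec j) x = 0 := by
  rw [dot]
  have : ∀ τ ∈ Finset.univ, T.rvec j τ * x τ
      = (if T.parentSeq j = τ then x τ else 0) - (if τ ∈ T.seqs j then x τ else 0) := by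
    intro τ _
    rw [rvec]
    split_ifs <;> ring
  rw [Finset.sum_congr rfl this, Finset.sum_sub_distrib,
    Finset.sum_ite_eq Finset.univ (T.parentSeq j) x, if_pos (Finset.mem_univ _),
    Finset.sum_ite_mem, Finset.univ_inter, hx.2.2 j, sub_self]

def level (d : ℕ) : Finset T.Dp := Finset.univ.filter (fun j => T.depth (T.parentSeq j) = d)

noncomputable def mval (c : T.Seq → ℝ) (j : T.Dp) : ℝ :=
  (T.seqs j).inf' (T.seqs_nonempty j) c

noncomputable def stepv (d : ℕ) (c : T.Seq → ℝ) : T.Seq → ℝ :=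
  fun τ => c τ + ∑ j ∈ T.level d, T.mval c j * T.rvec j τ

noncomputable def iterv' (T : TFDP) (c : T.Seq → ℝ) : ℕ → (T.Seq → ℝ)
  | 0 => c
  | (k+1) => T.stepv ((Finset.univ.sup T.depth) - k) (iterv' T c k)

noncomputable def iterv (c : T.Seq → ℝ) (k : ℕ) : T.Seq → ℝ := iterv' T c k

lemma iterv_zero (c : T.Seq → ℝ) : T.iterv c 0 = c := rfl

lemma iterv_succ (c : T.Seq → ℝ) (k : ℕ) :
    T.iterv c (k+1) = T.stepv ((Finset.univ.sup T.depth) - k) (T.iterv c k) := rfl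

lemma dot_stepv {x : T.Seq → ℝ} (hx : x ∈ T.poly) (d : ℕ) (c : T.Seq → ℝ) :
    T.dot (T.stepv d c) x = T.dot c x := by
  rw [dot, dot]
  have : ∀ τ ∈ Finset.univ, T.stepv d c τ * x τ
      = c τ * x τ + ∑ j ∈ T.level d, T.mval c j * (T.rvec j τ * x τ) := by
    intro τ _
    rw [stepv, add_mul, Finset.sum_mul]
    congr 1
    exact Finset.sum_congr rfl (fun j _ => by ring)
  rw [Finset.sum_congr rfl this, Finset.sum_add_distrib, Finset.sum_comm]
  have : ∀ j ∈ T.level d, ∑ τ : T.Seq, T.mval c j * (T.rvec j τ * x τ) = 0 := by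
    intro j _
    rw [← Finset.mul_sum]
    have := T.dot_rvec hx j
    rw [dot] at this
    rw [this, mul_zero]
  rw [Finset.sum_congr rfl this, Finset.sum_const, smul_zero, add_zero]

lemma dot_iterv {x : T.Seq → ℝ} (hx : x ∈ T.poly) (c : T.Seq → ℝ) (k : ℕ) :
    T.dot (T.iterv c k) x = T.dot c x := by
  induction k with
  | zero => rfl
  | succ k ih => rw [iterv_succ, T.dot_stepv hx, ih]

lemma stepv_apply_seq {σ : T.Seq} {j : T.Dp} (hσ : σ ∈ T.seqs j) {d : ℕ}
    (hd : T.depth σ ≠ d) (c : T.Seq → ℝ) :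
    T.stepv d c σ = c σ - (if T.depth (T.parentSeq j) = d then T.mval c j else 0) := by
  rw [stepv]
  have hterm : ∀ j' ∈ T.level d, T.mval c j' * T.rvec j' σ
      = -(if j' = j then (if T.depth (T.parentSeq j) = d then T.mval c j else 0) else 0) := by
    intro j' hj'
    have hj'd : T.depth (T.parentSeq j') = d := by
      have := Finset.mem_filter.mp hj'; exact this.2
    rw [rvec]
    have h1 : T.parentSeq j' ≠ σ := by
      intro he; rw [he] at hj'd; exact hd hj'd
    rw [if_neg h1, zero_sub]
    by_cases h2 : σ ∈ T.seqs j'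
    · have hje : j' = j := T.mem_seqs_unique h2 hσ
      subst hje
      rw [if_pos h2, if_pos rfl, if_pos hj'd]; ring
    · have hje : j' ≠ j := fun he => h2 (he ▸ hσ)
      rw [if_neg h2, if_neg hje]; ring
  rw [Finset.sum_congr rfl hterm, Finset.sum_neg_distrib,
    Finset.sum_ite_eq' (T.level d) j]
  by_cases hjl : j ∈ T.level d
  · rw [if_pos hjl]; ring
  · have : T.depth (T.parentSeq j) ≠ d := by
      intro he; exact hjl (Finset.mem_filter.mpr ⟨Finset.mem_univ _, he⟩)
    rw [if_neg hjl, if_neg this]; ring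

lemma iterv_inv (c : T.Seq → ℝ) :
    ∀ k, k ≤ (Finset.univ.sup T.depth) + 1 →
      ∀ j, (Finset.univ.sup T.depth) < T.depth (T.parentSeq j) + k →
        (∀ σ ∈ T.seqs j, 0 ≤ T.iterv c k σ) ∧ (∃ σ ∈ T.seqs j, T.iterv c k σ = 0) := by
  set N := Finset.univ.sup T.depth with hN
  have hdle : ∀ j, T.depth (T.parentSeq j) + 1 ≤ N := by
    intro j
    obtain ⟨σ0, hσ0⟩ := T.seqs_nonempty j
    have h1 : T.depth σ0 ≤ N := Finset.le_sup (Finset.mem_univ σ0)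
    have h2 := T.depth_seq j σ0 hσ0
    omega
  intro k
  induction k with
  | zero => intro _ j hj; exact absurd hj (by have := hdle j; omega)
  | succ k ih =>
    intro hk j hj
    have hk' : k ≤ N + 1 := by omega
    have hdσ : ∀ σ ∈ T.seqs j, T.depth σ = T.depth (T.parentSeq j) + 1 :=
      fun σ hσ => T.depth_seq j σ hσ
    by_cases hcase : T.depth (T.parentSeq j) + k = N
    · -- level being processed
      have hdeq : T.depth (T.parentSeq j) = N - k := by omega
      constructor
      · intro σ hσ
        rw [iterv_succ, T.stepv_apply_seq hσ (by have := hdσ σ hσ; omega), if_pos hdeq]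
        have : T.mval (T.iterv c k) j ≤ T.iterv c k σ := Finset.inf'_le _ hσ
        linarith
      · obtain ⟨σ0, hσ0, he⟩ := Finset.exists_mem_eq_inf' (T.seqs_nonempty j) (T.iterv c k)
        refine ⟨σ0, hσ0, ?_⟩
        rw [iterv_succ, T.stepv_apply_seq hσ0 (by have := hdσ σ0 hσ0; omega), if_pos hdeq,
          ← he, mval]
        ring
    · -- deeper level, untouched
      have hj' : N < T.depth (T.parentSeq j) + k := by omega
      have hne : T.depth (T.parentSeq j) ≠ N - k := by omega
      have hunch : ∀ σ ∈ T.seqs j, T.iterv c (k+1) σ = T.iterv c k σ := by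
        intro σ hσ
        rw [iterv_succ, T.stepv_apply_seq hσ (by have := hdσ σ hσ; omega), if_neg hne]
        ring
      obtain ⟨ha, σ0, hσ0, hz⟩ := ih hk' j hj'
      exact ⟨fun σ hσ => (hunch σ hσ) ▸ ha σ hσ, ⟨σ0, hσ0, (hunch σ0 hσ0) ▸ hz⟩⟩

/-- Canonicalization of a row: equal on the polytope, pointwise nonnegative, and with a
zero entry in every decision point's action set. -/
lemma canonRow (c : T.Seq → ℝ) (hc : ∀ x ∈ T.poly, 0 ≤ T.dot c x) :
    ∃ c' : T.Seq → ℝ, (∀ x ∈ T.poly, T.dot c' x = T.dot c x) ∧ (∀ τ, 0 ≤ c' τ) ∧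
      (∀ j, ∃ σ ∈ T.seqs j, c' σ = 0) := by
  classical
  set N := Finset.univ.sup T.depth with hN
  set c' := T.iterv c (N + 1) with hc'
  have hdot : ∀ x ∈ T.poly, T.dot c' x = T.dot c x := fun x hx => T.dot_iterv hx c (N+1)
  have hinv := T.iterv_inv c (N+1) le_rfl
  have hpointed : ∀ j, ∃ σ ∈ T.seqs j, c' σ = 0 := fun j => (hinv j (by omega)).2
  have hseqnn : ∀ j, ∀ σ ∈ T.seqs j, 0 ≤ c' σ := fun j => (hinv j (by omega)).1
  -- zero program
  have hπex : ∀ j, ∃ σ, σ ∈ T.seqs j ∧ c' σ = 0 := by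
    intro j; obtain ⟨σ, h1, h2⟩ := hpointed j; exact ⟨σ, h1, h2⟩
  choose π hπmem hπzero using hπex
  have hπ : T.IsProg π := hπmem
  -- dot of c' against zeta π ρ is c' ρ
  have hdz : ∀ ρ, T.dot c' (T.zeta π ρ) = c' ρ := by
    intro ρ
    rw [dot]
    rw [Finset.sum_eq_single ρ]
    · rw [T.zeta_self, mul_one]
    · intro b _ hb
      by_cases hz : T.zeta π ρ b = 0
      · rw [hz, mul_zero]
      · rcases T.zeta_support hz with h | ⟨j, hj, hje⟩
        · exact absurd h hb
        · rw [← hje, hπzero j, zero_mul]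
    · intro h; exact absurd (Finset.mem_univ ρ) h
  have hroot : 0 ≤ c' T.root := by
    have h1 := hc _ (T.zeta_root_mem_poly hπ)
    have h2 := hdot _ (T.zeta_root_mem_poly hπ)
    have h3 := hdz T.root
    linarith
  have horphan : ∀ ρ, T.parentDp ρ = none → ρ ≠ T.root → 0 ≤ c' ρ := by
    intro ρ hρ hne
    by_contra hlt
    push_neg at hlt
    set t := (c' T.root + 1) / (-(c' ρ)) with ht
    have hcρ : 0 < -(c' ρ) := by linarith
    have ht0 : 0 ≤ t := div_nonneg (by linarith) hcρ.le
    have hρn : ∀ j, ρ ∉ T.seqs j := by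
      intro j h
      rw [(T.parentDp_spec ρ j).mpr h] at hρ; exact nomatch hρ
    have hx : (fun τ => T.zeta π T.root τ + t * T.zeta π ρ τ) ∈ T.poly := by
      refine ⟨fun τ => add_nonneg (T.zeta_nonneg π T.root τ)
        (mul_nonneg ht0 (T.zeta_nonneg π ρ τ)), ?_, fun j => ?_⟩
      · show T.zeta π T.root T.root + t * T.zeta π ρ T.root = 1
        rw [T.zeta_self, T.zeta_none T.parentDp_root (Ne.symm hne), mul_zero, add_zero]
      · show T.zeta π T.root (T.parentSeq j) + t * T.zeta π ρ (T.parentSeq j)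
          = ∑ σ ∈ T.seqs j, (T.zeta π T.root σ + t * T.zeta π ρ σ)
        have e1 := T.zeta_conserve hπ T.root j
        have e2 := T.zeta_conserve hπ ρ j
        rw [if_neg (T.root_not_mem_seqs j), sub_zero] at e1
        rw [if_neg (hρn j), sub_zero] at e2
        rw [e1, e2, Finset.mul_sum, ← Finset.sum_add_distrib]
    have h1 := hc _ hx
    have h2 := hdot _ hx
    have h3 : T.dot c' (fun τ => T.zeta π T.root τ + t * T.zeta π ρ τ)
        = T.dot c' (T.zeta π T.root) + t * T.dot c' (T.zeta π ρ) := by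
      rw [dot, dot, dot, Finset.mul_sum, ← Finset.sum_add_distrib]
      exact Finset.sum_congr rfl (fun τ _ => by ring)
    have h4 := hdz T.root
    have h5 := hdz ρ
    have h6 : t * c' ρ = -(c' T.root + 1) := by
      rw [ht]
      rw [div_mul_eq_mul_div, div_eq_iff hcρ.ne']
      ring
    rw [h4, h5] at h3
    linarith
  refine ⟨c', hdot, fun τ => ?_, hpointed⟩
  rcases h : T.parentDp τ with _ | j
  · by_cases hτ : τ = T.root
    · rw [hτ]; exact hroot
    · exact horphan τ h hτ
  · exact hseqnn j τ ((T.parentDp_spec τ j).mp h)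

/-! ### Summation helpers -/

lemma children_eq_filter (σ : T.Seq) :
    T.children σ = Finset.univ.filter (fun j => T.parentSeq j = σ) := by
  ext j; simp [T.mem_children]

lemma sum_children_swap {x : T.Seq → ℝ} (hx : x ∈ T.poly) (F : T.Dp → ℝ) :
    ∑ σ' : T.Seq, (∑ j' ∈ T.children σ', F j') * x σ'
      = ∑ j' : T.Dp, F j' * x (T.parentSeq j') := by
  have h1 : ∀ σ' : T.Seq, (∑ j' ∈ T.children σ', F j') * x σ'
      = ∑ j' : T.Dp, (if T.parentSeq j' = σ' then F j' * x σ' else 0) := by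
    intro σ'
    rw [children_eq_filter, Finset.sum_filter, Finset.sum_mul]
    exact Finset.sum_congr rfl (fun j' _ => by split_ifs <;> ring)
  rw [Finset.sum_congr rfl (fun σ' _ => h1 σ'), Finset.sum_comm]
  refine Finset.sum_congr rfl (fun j' _ => ?_)
  rw [Finset.sum_ite_eq Finset.univ (T.parentSeq j') (fun σ' => F j' * x σ'),
    if_pos (Finset.mem_univ _)]

lemma sum_Bp {x : T.Seq → ℝ} (hx : x ∈ T.poly) (B : T.Dp → T.Dp → ℝ) (j : T.Dp) :
    ∑ σ' : T.Seq, T.Bp B j σ' * x σ' = ∑ j'' : T.Dp, B j j'' * x (T.parentSeq j'') := by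
  have h1 : ∀ σ' : T.Seq, T.Bp B j σ' * x σ'
      = ∑ j'' : T.Dp, (if σ' ∈ T.seqs j'' then B j j'' * x σ' else 0) := by
    intro σ'
    rcases h : T.parentDp σ' with _ | j0
    · rw [Bp, h]
      have : ∀ j'' : T.Dp, (if σ' ∈ T.seqs j'' then B j j'' * x σ' else 0) = 0 := by
        intro j''
        rw [if_neg]
        intro hmem
        rw [(T.parentDp_spec σ' j'').mpr hmem] at h; exact nomatch h
      rw [Finset.sum_congr rfl (fun j'' _ => this j''), Finset.sum_const, smul_zero,
        Option.elim, zero_mul]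
    · rw [Bp, h]
      have hmem : σ' ∈ T.seqs j0 := (T.parentDp_spec σ' j0).mp h
      rw [Finset.sum_eq_single j0]
      · rw [if_pos hmem, Option.elim]
      · intro b _ hb
        rw [if_neg]
        intro hmem'
        exact hb (T.mem_seqs_unique hmem' hmem)
      · intro hj0; exact absurd (Finset.mem_univ j0) hj0
  rw [Finset.sum_congr rfl (fun σ' _ => h1 σ'), Finset.sum_comm]
  refine Finset.sum_congr rfl (fun j'' _ => ?_)
  rw [Finset.sum_ite_mem, Finset.univ_inter, ← Finset.mul_sum, hx.2.2 j'']

lemma dot_sub_sum {ι : Type*} (s : Finset ι) (a : T.Seq → ℝ) (b : ι → T.Seq → ℝ)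
    (v : T.Seq → ℝ) :
    T.dot (fun τ => a τ - ∑ i ∈ s, b i τ) v = T.dot a v - ∑ i ∈ s, T.dot (b i) v := by
  have h1 : ∀ τ ∈ (Finset.univ : Finset T.Seq), (a τ - ∑ i ∈ s, b i τ) * v τ
      = a τ * v τ - ∑ i ∈ s, b i τ * v τ := by
    intro τ _; rw [sub_mul, Finset.sum_mul]
  rw [dot, Finset.sum_congr rfl h1, Finset.sum_sub_distrib, Finset.sum_comm]
  rfl

/-! ### The two directions -/

lemma utc_maps_poly {A : T.Seq → T.Seq → ℝ} {B : T.Dp → T.Dp → ℝ} (h : T.UTC A B)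
    {x : T.Seq → ℝ} (hx : x ∈ T.poly) : T.mulVec A x ∈ T.poly := by
  obtain ⟨heq, hr1, hr0, hA, hB⟩ := h
  refine ⟨fun σ => ?_, ?_, fun j => ?_⟩
  · exact Finset.sum_nonneg (fun σ' _ => mul_nonneg (hA σ σ') (hx.1 σ'))
  · rw [mulVec_apply, dot, Finset.sum_eq_single T.root]
    · rw [hr1, one_mul, hx.2.1]
    · intro b _ hb; rw [hr0 b hb, zero_mul]
    · intro hmem; exact absurd (Finset.mem_univ T.root) hmem
  · -- conservation
    have key : ∀ σ' : T.Seq, (A (T.parentSeq j) σ' + T.Bp B j σ') * x σ'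
        = ((∑ σ ∈ T.seqs j, A σ σ') + ∑ j' ∈ T.children σ', B j j') * x σ' := by
      intro σ'; rw [heq j σ']
    have e1 : ∑ σ' : T.Seq, (A (T.parentSeq j) σ' + T.Bp B j σ') * x σ'
        = T.mulVec A x (T.parentSeq j) + ∑ σ' : T.Seq, T.Bp B j σ' * x σ' := by
      rw [mulVec_apply, dot, ← Finset.sum_add_distrib]
      exact Finset.sum_congr rfl (fun σ' _ => by ring)
    have e2 : ∑ σ' : T.Seq, ((∑ σ ∈ T.seqs j, A σ σ') + ∑ j' ∈ T.children σ', B j j') * x σ'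
        = (∑ σ ∈ T.seqs j, T.mulVec A x σ) + ∑ σ' : T.Seq, (∑ j' ∈ T.children σ', B j j') * x σ' := by
      have h0 : ∀ σ' ∈ (Finset.univ : Finset T.Seq),
          ((∑ σ ∈ T.seqs j, A σ σ') + ∑ j' ∈ T.children σ', B j j') * x σ'
          = (∑ σ ∈ T.seqs j, A σ σ' * x σ') + (∑ j' ∈ T.children σ', B j j') * x σ' := by
        intro σ' _; rw [add_mul, Finset.sum_mul]
      rw [Finset.sum_congr rfl h0, Finset.sum_add_distrib, Finset.sum_comm]
      rfl
    have e3 := Finset.sum_congr rfl (fun σ' (_ : σ' ∈ Finset.univ) => key σ')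
    rw [e1, e2, T.sum_Bp hx B j, T.sum_children_swap hx (B j)] at e3
    linarith

lemma linear_is_utc {A : T.Seq → T.Seq → ℝ} (hmaps : ∀ x ∈ T.poly, T.mulVec A x ∈ T.poly) :
    ∃ (A' : T.Seq → T.Seq → ℝ) (B : T.Dp → T.Dp → ℝ),
      T.UTC A' B ∧ ∀ x ∈ T.poly, ∀ σ, T.dot (A' σ) x = T.dot (A σ) x := by
  classical
  -- canonicalize all rows
  have hrow : ∀ σ, ∀ x ∈ T.poly, 0 ≤ T.dot (A σ) x := by
    intro σ x hx
    exact (hmaps x hx).1 σ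
  choose C hC1 hC2 hC3 using fun σ => T.canonRow (A σ) (hrow σ)
  set A' : T.Seq → T.Seq → ℝ :=
    fun σ τ => if σ = T.root then (if τ = T.root then 1 else 0) else C σ τ with hA'
  have hA'root : ∀ τ, A' T.root τ = if τ = T.root then 1 else 0 := by
    intro τ; simp [hA']
  have hA'dot : ∀ σ, ∀ x ∈ T.poly, T.dot (A' σ) x = T.dot (A σ) x := by
    intro σ x hx
    by_cases hσ : σ = T.root
    · subst hσ
      have e1 : T.dot (A' T.root) x = x T.root := by
        rw [dot]
        have : ∀ τ ∈ Finset.univ, A' T.root τ * x τ = if τ = T.root then x τ else 0 := by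
          intro τ _
          rw [hA'root τ]; split_ifs <;> ring
        rw [Finset.sum_congr rfl this, Finset.sum_ite_eq' Finset.univ T.root x,
          if_pos (Finset.mem_univ _)]
      rw [e1, hx.2.1, ← (hmaps x hx).2.1, mulVec_apply]
    · have : A' σ = C σ := by funext τ; simp [hA', hσ]
      rw [this, hC1 σ x hx]
  have hA'nonneg : ∀ σ τ, 0 ≤ A' σ τ := by
    intro σ τ
    by_cases hσ : σ = T.root
    · subst hσ; rw [hA'root τ]; split_ifs <;> norm_num
    · simpa [hA', hσ] using hC2 σ τ
  have hA'pointed : ∀ σ j, ∃ τ ∈ T.seqs j, A' σ τ = 0 := by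
    intro σ j
    by_cases hσ : σ = T.root
    · subst hσ
      obtain ⟨τ, hτ⟩ := T.seqs_nonempty j
      refine ⟨τ, hτ, ?_⟩
      rw [hA'root τ, if_neg (by rintro rfl; exact T.root_not_mem_seqs j hτ)]
    · simpa [hA', hσ] using hC3 σ j
  -- the defect rows
  set g : T.Dp → T.Seq → ℝ :=
    fun j τ => A' (T.parentSeq j) τ - ∑ σ ∈ T.seqs j, A' σ τ with hg
  have hgvanish : ∀ j, ∀ x ∈ T.poly, T.dot (g j) x = 0 := by
    intro j x hx
    have e1 : T.dot (g j) x = T.dot (A' (T.parentSeq j)) x - ∑ σ ∈ T.seqs j, T.dot (A' σ) x :=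
      T.dot_sub_sum (T.seqs j) (A' (T.parentSeq j)) (fun σ => A' σ) x
    rw [e1, hA'dot _ x hx, Finset.sum_congr rfl (fun σ _ => hA'dot σ x hx)]
    have h2 := (hmaps x hx).2.2 j
    simp only [mulVec_apply] at h2
    rw [h2, sub_self]
  -- zero programs for parent rows
  have hzp : ∀ j j', ∃ τ, τ ∈ T.seqs j' ∧ A' (T.parentSeq j) τ = 0 := by
    intro j j'
    obtain ⟨τ, h1, h2⟩ := hA'pointed (T.parentSeq j) j'
    exact ⟨τ, h1, h2⟩
  choose π hπmem hπzero using hzp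
  have hπprog : ∀ j, T.IsProg (π j) := fun j j' => hπmem j j'
  -- B
  set B : T.Dp → T.Dp → ℝ :=
    fun j j' => - T.dot (g j) (T.zeta (π j) (π j j')) with hB
  have hBeq : ∀ j j' (σ' : T.Seq), σ' ∈ T.seqs j' →
      B j j' = - T.dot (g j) (T.zeta (π j) σ') := by
    intro j j' σ' hσ'
    have heq := T.dot_zeta_sibling (hgvanish j) (hπprog j) (hπprog j) (hπmem j j') hσ'
    show - T.dot (g j) (T.zeta (π j) (π j j')) = - T.dot (g j) (T.zeta (π j) σ')
    rw [heq]
  have hBnonneg : ∀ j j', 0 ≤ B j j' := by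
    intro j j'
    show 0 ≤ - T.dot (g j) (T.zeta (π j) (π j j'))
    have hzero : T.dot (A' (T.parentSeq j)) (T.zeta (π j) (π j j')) = 0 := by
      rw [dot]
      refine Finset.sum_eq_zero (fun τ _ => ?_)
      by_cases hz : T.zeta (π j) (π j j') τ = 0
      · rw [hz, mul_zero]
      · rcases T.zeta_support hz with h | ⟨j1, hj1, hje⟩
        · rw [h, hπzero j j', zero_mul]
        · rw [← hje, hπzero j j1, zero_mul]
    have hsplit : T.dot (g j) (T.zeta (π j) (π j j'))
        = T.dot (A' (T.parentSeq j)) (T.zeta (π j) (π j j'))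
          - ∑ σ ∈ T.seqs j, T.dot (A' σ) (T.zeta (π j) (π j j')) :=
      T.dot_sub_sum (T.seqs j) (A' (T.parentSeq j)) (fun σ => A' σ) _
    rw [hsplit, hzero, zero_sub, neg_neg]
    refine Finset.sum_nonneg (fun σ _ => ?_)
    rw [dot]
    exact Finset.sum_nonneg (fun τ _ =>
      mul_nonneg (hA'nonneg σ τ) (T.zeta_nonneg (π j) (π j j') τ))
  -- flow equations
  have hflow : ∀ j (σ' : T.Seq),
      A' (T.parentSeq j) σ' + T.Bp B j σ'
        = (∑ σ ∈ T.seqs j, A' σ σ') + ∑ j' ∈ T.children σ', B j j' := by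
    intro j σ'
    have hdec := T.dot_zeta_decomp (hπprog j) (g j) σ'
    have hsum : ∑ j' ∈ T.children σ', T.dot (g j) (T.zeta (π j) (π j j'))
        = - ∑ j' ∈ T.children σ', B j j' := by
      rw [← Finset.sum_neg_distrib]
      refine Finset.sum_congr rfl (fun j' _ => ?_)
      show T.dot (g j) (T.zeta (π j) (π j j')) = -(- T.dot (g j) (T.zeta (π j) (π j j')))
      ring
    rw [hsum] at hdec
    have hgval : g j σ' = A' (T.parentSeq j) σ' - ∑ σ ∈ T.seqs j, A' σ σ' := rfl
    rcases h : T.parentDp σ' with _ | j''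
    · -- forest root
      have hdz : T.dot (g j) (T.zeta (π j) σ') = 0 := by
        by_cases hσ : σ' = T.root
        · subst hσ
          exact hgvanish j _ (T.zeta_root_mem_poly (hπprog j))
        · exact T.dot_zeta_orphan (hgvanish j) (hπprog j) h hσ
      rw [hdz] at hdec
      have hBp : T.Bp B j σ' = 0 := by rw [Bp, h]; rfl
      rw [hBp, add_zero]
      rw [hgval] at hdec
      linarith
    · -- has a parent decision point
      have hmem' : σ' ∈ T.seqs j'' := (T.parentDp_spec σ' j'').mp h
      have hdz : T.dot (g j) (T.zeta (π j) σ') = - B j j'' := by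
        rw [hBeq j j'' σ' hmem']; ring
      rw [hdz] at hdec
      have hBp : T.Bp B j σ' = B j j'' := by rw [Bp, h]; rfl
      rw [hBp]
      rw [hgval] at hdec
      linarith
  exact ⟨A', B, ⟨hflow, by rw [hA'root T.root, if_pos rfl],
    fun σ' hσ' => by rw [hA'root σ', if_neg hσ'],
    hA'nonneg, hBnonneg⟩, fun x hx σ => hA'dot σ x hx⟩

end TFDP

/-- main equivalence: the UTC deviations coincide exactly with the
linear deviations of a sequence-form polytope. -/
theorem utc_eq_linear (T : TFDP) :
    {f : (T.Seq → ℝ) → (T.Seq → ℝ) |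
        ∃ (A : T.Seq → T.Seq → ℝ) (B : T.Dp → T.Dp → ℝ),
          T.UTC A B ∧ ∀ x ∈ T.poly, f x = T.mulVec A x}
      = {f : (T.Seq → ℝ) → (T.Seq → ℝ) |
          ∃ A : T.Seq → T.Seq → ℝ,
            (∀ x ∈ T.poly, f x = T.mulVec A x) ∧ ∀ x ∈ T.poly, T.mulVec A x ∈ T.poly} := by
  ext f
  simp only [Set.mem_setOf_eq]
  constructor
  · rintro ⟨A, B, hutc, hf⟩
    exact ⟨A, hf, fun x hx => T.utc_maps_poly hutc hx⟩
  · rintro ⟨A, hf, hmaps⟩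
    obtain ⟨A', B, hutc, hdot⟩ := T.linear_is_utc hmaps
    refine ⟨A', B, hutc, fun x hx => ?_⟩
    funext σ
    rw [hf x hx, T.mulVec_apply, T.mulVec_apply, hdot x hx σ]
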